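/- Let $\psi: [r_+,\infty) \to \mathbb{R}$ be $C^2$, let $\Delta(r) = r^2 - 2Mr + a^2$ with $0 \le |a| < M$ and $r_+ = M+\sqrt{M^2-a^2}$, suppose $\psi$ and $\Delta\, \psi'$ are bounded and $\Delta (\psi')^2 \to 0$ as $r \to \infty$, and suppose $X(\Delta X\psi) = F$ pointwise on $[r_+,\infty)$ where $X = d/dr$. If $\int_{r_+}^\infty r^{-1} F^2\, dr < \infty$, then $\int_{r_+}^\infty r\,(\psi')^2\, dr \le C \int_{r_+}^\infty r^{-1} F^2\, dr$ for a constant $C$ depending only on $M$ and $a$. -/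

import Mathlib

open MeasureTheory Filter

set_option maxHeartbeats 1000000 in
/-- **Spacelike redshift multiplier estimate (radial model).**
Let `Δ(r) = r² - 2Mr + a²` with `0 ≤ |a| < M`, `r₊ = M + √(M²-a²)`. There is a
constant `C = C(M,a) > 0` such that: if `ψ` is `C²`, `ψ` and `Δ ψ'` are bounded on
`[r₊,∞)`, `Δ (ψ')² → 0` at infinity, `(Δ ψ')' = F` pointwise on `[r₊,∞)`, and
`∫_{r₊}^∞ r⁻¹ F² < ∞`, then `∫_{r₊}^∞ r (ψ')² ≤ C ∫_{r₊}^∞ r⁻¹ F²`. -/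
theorem spacelike_redshift_estimate (M a : ℝ) (hM : 0 < M) (ha : |a| < M) :
    ∃ C : ℝ, 0 < C ∧ ∀ ψ F : ℝ → ℝ,
      ContDiff ℝ 2 ψ →
      (∃ B, ∀ r ≥ M + Real.sqrt (M ^ 2 - a ^ 2),
        |ψ r| ≤ B ∧ |(r ^ 2 - 2 * M * r + a ^ 2) * deriv ψ r| ≤ B) →
      Tendsto (fun r => (r ^ 2 - 2 * M * r + a ^ 2) * (deriv ψ r) ^ 2) atTop (nhds 0) →
      (∀ r ≥ M + Real.sqrt (M ^ 2 - a ^ 2),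
        deriv (fun s => (s ^ 2 - 2 * M * s + a ^ 2) * deriv ψ s) r = F r) →
      (∫⁻ r in Set.Ioi (M + Real.sqrt (M ^ 2 - a ^ 2)),
          ENNReal.ofReal (r⁻¹ * F r ^ 2)) ≠ ⊤ →
      (∫⁻ r in Set.Ioi (M + Real.sqrt (M ^ 2 - a ^ 2)),
          ENNReal.ofReal (r * (deriv ψ r) ^ 2))
        ≤ ENNReal.ofReal C *
          ∫⁻ r in Set.Ioi (M + Real.sqrt (M ^ 2 - a ^ 2)),
            ENNReal.ofReal (r⁻¹ * F r ^ 2) := by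
  have hMa : 0 < M ^ 2 - a ^ 2 := by nlinarith [abs_nonneg a, sq_abs a]
  set s : ℝ := Real.sqrt (M ^ 2 - a ^ 2) with hs_def
  have hs : 0 < s := Real.sqrt_pos.mpr hMa
  have hs2 : s ^ 2 = M ^ 2 - a ^ 2 := Real.sq_sqrt hMa.le
  set rp : ℝ := M + s with hrp_def
  have hrp : 0 < rp := by positivity
  have hrpM : M < rp := by simp [hrp_def]; linarith
  set c : ℝ := s / rp with hc_def
  have hc : 0 < c := by positivity
  refine ⟨1 / c ^ 2, by positivity, ?_⟩
  intro ψ F hψ _hbd _htend hode hF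
  set L : ENNReal := ∫⁻ r in Set.Ioi rp, ENNReal.ofReal (r⁻¹ * F r ^ 2) with hL_def
  set A : ℝ := L.toReal with hA_def
  have hA0 : 0 ≤ A := ENNReal.toReal_nonneg
  -- regularity of deriv ψ
  have hψ1 : ContDiff ℝ 1 (deriv ψ) := by
    have := (contDiff_succ_iff_deriv (n := 1)).mp (by exact_mod_cast hψ)
    exact this.2.2
  have hdψ : Differentiable ℝ (deriv ψ) := hψ1.differentiable one_ne_zero
  have hcψ' : Continuous (deriv ψ) := hψ1.continuous
  have hcψ'' : Continuous (deriv (deriv ψ)) := hψ1.continuous_deriv le_rfl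
  set g : ℝ → ℝ := fun s => (s ^ 2 - 2 * M * s + a ^ 2) * deriv ψ s with hg_def
  set G : ℝ → ℝ := deriv g with hG_def
  have hΔ : ∀ x : ℝ, HasDerivAt (fun y : ℝ => y ^ 2 - 2 * M * y + a ^ 2) (2 * x - 2 * M) x := by
    intro x
    have h1 : HasDerivAt (fun y : ℝ => y ^ 2) (2 * x) x := by
      simpa using hasDerivAt_pow 2 x
    have h2 : HasDerivAt (fun y : ℝ => 2 * M * y) (2 * M) x := by
      simpa using (hasDerivAt_id x).const_mul (2 * M)
    simpa using (h1.sub h2).add_const (a ^ 2)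
  have hψ'x : ∀ x : ℝ, HasDerivAt (deriv ψ) (deriv (deriv ψ) x) x :=
    fun x => (hdψ x).hasDerivAt
  have hg' : ∀ x : ℝ, HasDerivAt g
      ((2 * x - 2 * M) * deriv ψ x + (x ^ 2 - 2 * M * x + a ^ 2) * deriv (deriv ψ) x) x :=
    fun x => (hΔ x).mul (hψ'x x)
  have hGval : ∀ x : ℝ, G x =
      (2 * x - 2 * M) * deriv ψ x + (x ^ 2 - 2 * M * x + a ^ 2) * deriv (deriv ψ) x :=
    fun x => (hg' x).deriv
  have hGc : Continuous G := by
    have : G = fun x =>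
        (2 * x - 2 * M) * deriv ψ x + (x ^ 2 - 2 * M * x + a ^ 2) * deriv (deriv ψ) x :=
      funext hGval
    rw [this]; fun_prop
  have hGF : ∀ x ≥ rp, G x = F x := fun x hx => hode x hx
  -- h = Δ (ψ')²  and its derivative
  set h : ℝ → ℝ := fun x => (x ^ 2 - 2 * M * x + a ^ 2) * (deriv ψ x) ^ 2 with hh_def
  have hh' : ∀ x : ℝ, HasDerivAt h
      (2 * G x * deriv ψ x - 2 * (x - M) * (deriv ψ x) ^ 2) x := by
    intro x
    have h1 : HasDerivAt (fun y => (deriv ψ y) ^ 2)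
        (2 * deriv ψ x ^ 1 * deriv (deriv ψ) x) x := by
      simpa using (hψ'x x).fun_pow 2
    have h2 := (hΔ x).fun_mul h1
    refine h2.congr_deriv ?_
    rw [hGval x]; ring
  -- the main estimate on finite intervals
  have key : ∀ R ≥ rp, (∫ x in rp..R, x * (deriv ψ x) ^ 2) ≤ A / c ^ 2 := by
    intro R hR
    have hcont1 : Continuous fun x => 2 * G x * deriv ψ x - 2 * (x - M) * (deriv ψ x) ^ 2 := by
      fun_prop
    have hFTC : (∫ x in rp..R, (2 * G x * deriv ψ x - 2 * (x - M) * (deriv ψ x) ^ 2))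
        = h R - h rp :=
      intervalIntegral.integral_eq_sub_of_hasDerivAt (fun x _ => hh' x)
        (hcont1.intervalIntegrable rp R)
    have hrp0 : h rp = 0 := by
      simp only [hh_def, hrp_def]
      have : (M + s) ^ 2 - 2 * M * (M + s) + a ^ 2 = 0 := by nlinarith
      rw [this]; ring
    have hR0 : 0 ≤ h R := by
      have hΔR : 0 ≤ R ^ 2 - 2 * M * R + a ^ 2 := by
        have : rp ≤ R := hR
        nlinarith [this]
      exact mul_nonneg hΔR (sq_nonneg _)
    have hge : 0 ≤ ∫ x in rp..R, (2 * G x * deriv ψ x - 2 * (x - M) * (deriv ψ x) ^ 2) := by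
      rw [hFTC, hrp0]; linarith
    have hi1 : IntervalIntegrable (fun x => 2 * G x * deriv ψ x) volume rp R :=
      (by fun_prop : Continuous fun x => 2 * G x * deriv ψ x).intervalIntegrable rp R
    have hi2 : IntervalIntegrable (fun x => 2 * (x - M) * (deriv ψ x) ^ 2) volume rp R :=
      (by fun_prop : Continuous fun x => 2 * (x - M) * (deriv ψ x) ^ 2).intervalIntegrable rp R
    have hsplit : (∫ x in rp..R, (2 * G x * deriv ψ x - 2 * (x - M) * (deriv ψ x) ^ 2))
        = (∫ x in rp..R, 2 * G x * deriv ψ x) - ∫ x in rp..R, 2 * (x - M) * (deriv ψ x) ^ 2 :=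
      intervalIntegral.integral_sub hi1 hi2
    have hstep1 : (∫ x in rp..R, 2 * (x - M) * (deriv ψ x) ^ 2)
        ≤ ∫ x in rp..R, 2 * G x * deriv ψ x := by
      have := hge
      rw [hsplit] at this; linarith
    -- lower bound for the left side
    have hi3 : IntervalIntegrable (fun x => 2 * c * (x * (deriv ψ x) ^ 2)) volume rp R :=
      (by fun_prop : Continuous fun x => 2 * c * (x * (deriv ψ x) ^ 2)).intervalIntegrable rp R
    have hlow : (∫ x in rp..R, 2 * c * (x * (deriv ψ x) ^ 2))
        ≤ ∫ x in rp..R, 2 * (x - M) * (deriv ψ x) ^ 2 := by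
      apply intervalIntegral.integral_mono_on hR hi3 hi2
      intro x hx
      have hx1 : rp ≤ x := hx.1
      have hcx : c * x ≤ x - M := by
        rw [hc_def, div_mul_eq_mul_div, div_le_iff₀ hrp]
        simp only [hrp_def]; nlinarith
      have := sq_nonneg (deriv ψ x)
      nlinarith
    -- upper bound for the right side via AM-GM
    have hi4 : IntervalIntegrable
        (fun x => (1 / c) * (x⁻¹ * G x ^ 2) + c * (x * (deriv ψ x) ^ 2)) volume rp R := by
      apply ContinuousOn.intervalIntegrable
      apply ContinuousOn.add
      · apply ContinuousOn.mul continuousOn_const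
        apply ContinuousOn.mul _ (hGc.pow 2).continuousOn
        apply ContinuousOn.inv₀ continuousOn_id
        intro x hx
        rcases Set.mem_uIcc.mp hx with h | h
        · exact ne_of_gt (lt_of_lt_of_le hrp h.1)
        · exact ne_of_gt (lt_of_lt_of_le (lt_of_lt_of_le hrp hR) h.1)
      · exact (by fun_prop : Continuous fun x => c * (x * (deriv ψ x) ^ 2)).continuousOn
    have hup : (∫ x in rp..R, 2 * G x * deriv ψ x)
        ≤ ∫ x in rp..R, ((1 / c) * (x⁻¹ * G x ^ 2) + c * (x * (deriv ψ x) ^ 2)) := by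
      apply intervalIntegral.integral_mono_on hR hi1 hi4
      intro x hx
      have hx0 : 0 < x := lt_of_lt_of_le hrp hx.1
      have hkey : 2 * G x * deriv ψ x ≤ G x ^ 2 / (c * x) + c * x * (deriv ψ x) ^ 2 := by
        rw [← sub_le_iff_le_add]
        rw [le_div_iff₀ (by positivity : (0:ℝ) < c * x)]
        nlinarith [sq_nonneg (G x - c * x * deriv ψ x)]
      have heq : (1 / c) * (x⁻¹ * G x ^ 2) = G x ^ 2 / (c * x) := by
        field_simp
      rw [heq]
      calc 2 * G x * deriv ψ x ≤ G x ^ 2 / (c * x) + c * x * (deriv ψ x) ^ 2 := hkey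
        _ = G x ^ 2 / (c * x) + c * (x * (deriv ψ x) ^ 2) := by ring
    -- bound ∫ x⁻¹ G² by A
    have hiG : IntervalIntegrable (fun x => x⁻¹ * G x ^ 2) volume rp R := by
      apply ContinuousOn.intervalIntegrable
      apply ContinuousOn.mul _ (hGc.pow 2).continuousOn
      apply ContinuousOn.inv₀ continuousOn_id
      intro x hx
      rcases Set.mem_uIcc.mp hx with h | h
      · exact ne_of_gt (lt_of_lt_of_le hrp h.1)
      · exact ne_of_gt (lt_of_lt_of_le (lt_of_lt_of_le hrp hR) h.1)
    have hGA : (∫ x in rp..R, x⁻¹ * G x ^ 2) ≤ A := by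
      rw [intervalIntegral.integral_of_le hR]
      have hnn : 0 ≤ᵐ[volume.restrict (Set.Ioc rp R)] fun x => x⁻¹ * G x ^ 2 := by
        refine (ae_restrict_iff' measurableSet_Ioc).mpr (ae_of_all _ fun x hx => ?_)
        have : 0 < x := lt_of_lt_of_le hrp hx.1.le
        positivity
      have hmeas : AEStronglyMeasurable (fun x => x⁻¹ * G x ^ 2)
          (volume.restrict (Set.Ioc rp R)) :=
        (measurable_inv.mul ((hGc.pow 2).measurable)).aestronglyMeasurable
      rw [MeasureTheory.integral_eq_lintegral_of_nonneg_ae hnn hmeas]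
      have hcongr : (∫⁻ x in Set.Ioc rp R, ENNReal.ofReal (x⁻¹ * G x ^ 2))
          = ∫⁻ x in Set.Ioc rp R, ENNReal.ofReal (x⁻¹ * F x ^ 2) := by
        apply lintegral_congr_ae
        refine (ae_restrict_iff' measurableSet_Ioc).mpr (ae_of_all _ fun x hx => ?_)
        simp only [hGF x hx.1.le]
      have hmono : (∫⁻ x in Set.Ioc rp R, ENNReal.ofReal (x⁻¹ * F x ^ 2)) ≤ L :=
        lintegral_mono_set Set.Ioc_subset_Ioi_self
      calc (∫⁻ x in Set.Ioc rp R, ENNReal.ofReal (x⁻¹ * G x ^ 2)).toReal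
          ≤ L.toReal := ENNReal.toReal_mono hF (by rw [hcongr]; exact hmono)
        _ = A := rfl
    -- assemble
    have hint5 : (∫ x in rp..R, ((1 / c) * (x⁻¹ * G x ^ 2) + c * (x * (deriv ψ x) ^ 2)))
        = (1 / c) * (∫ x in rp..R, x⁻¹ * G x ^ 2)
          + c * ∫ x in rp..R, x * (deriv ψ x) ^ 2 := by
      rw [intervalIntegral.integral_add (hiG.const_mul _)
        (((by fun_prop : Continuous fun x => x * (deriv ψ x) ^ 2).intervalIntegrable
          rp R).const_mul _)]
      rw [intervalIntegral.integral_const_mul, intervalIntegral.integral_const_mul]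
    have hint6 : (∫ x in rp..R, 2 * c * (x * (deriv ψ x) ^ 2))
        = 2 * c * ∫ x in rp..R, x * (deriv ψ x) ^ 2 :=
      intervalIntegral.integral_const_mul _ _
    have hfinal : 2 * c * (∫ x in rp..R, x * (deriv ψ x) ^ 2)
        ≤ (1 / c) * A + c * ∫ x in rp..R, x * (deriv ψ x) ^ 2 := by
      have h1 : (1 / c) * (∫ x in rp..R, x⁻¹ * G x ^ 2) ≤ (1 / c) * A :=
        mul_le_mul_of_nonneg_left hGA (by positivity)
      calc 2 * c * (∫ x in rp..R, x * (deriv ψ x) ^ 2)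
          = ∫ x in rp..R, 2 * c * (x * (deriv ψ x) ^ 2) := hint6.symm
        _ ≤ ∫ x in rp..R, 2 * (x - M) * (deriv ψ x) ^ 2 := hlow
        _ ≤ ∫ x in rp..R, 2 * G x * deriv ψ x := hstep1
        _ ≤ ∫ x in rp..R, ((1 / c) * (x⁻¹ * G x ^ 2) + c * (x * (deriv ψ x) ^ 2)) := hup
        _ = (1 / c) * (∫ x in rp..R, x⁻¹ * G x ^ 2)
            + c * ∫ x in rp..R, x * (deriv ψ x) ^ 2 := hint5
        _ ≤ (1 / c) * A + c * ∫ x in rp..R, x * (deriv ψ x) ^ 2 := by linarith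
    have : c * (∫ x in rp..R, x * (deriv ψ x) ^ 2) ≤ (1 / c) * A := by linarith
    rw [div_eq_mul_inv, ← one_div]
    calc (∫ x in rp..R, x * (deriv ψ x) ^ 2)
        = c⁻¹ * (c * ∫ x in rp..R, x * (deriv ψ x) ^ 2) := by
          rw [← mul_assoc, inv_mul_cancel₀ hc.ne', one_mul]
      _ ≤ c⁻¹ * ((1 / c) * A) := mul_le_mul_of_nonneg_left this (by positivity)
      _ = A * (1 / c ^ 2) := by rw [one_div, one_div, pow_two, mul_inv]; ring
  -- integrability on Ioi
  have hfc : Continuous fun x => x * (deriv ψ x) ^ 2 := by fun_prop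
  have hInt : IntegrableOn (fun x => x * (deriv ψ x) ^ 2) (Set.Ioi rp) := by
    apply MeasureTheory.integrableOn_Ioi_of_intervalIntegral_norm_bounded (A / c ^ 2) rp
      (f := fun x => x * (deriv ψ x) ^ 2) (b := fun n : ℕ => rp + n) (l := atTop)
      (fun n => (hfc.intervalIntegrable rp (rp + n)).1)
      (tendsto_atTop_add_const_left _ _ tendsto_natCast_atTop_atTop)
    filter_upwards with n
    have hRn : rp ≤ rp + (n : ℝ) := by simp [Nat.cast_nonneg]
    have : (∫ x in rp..rp + (n:ℝ), ‖x * (deriv ψ x) ^ 2‖)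
        = ∫ x in rp..rp + (n:ℝ), x * (deriv ψ x) ^ 2 := by
      rw [intervalIntegral.integral_of_le hRn, intervalIntegral.integral_of_le hRn]
      apply MeasureTheory.integral_congr_ae
      refine (ae_restrict_iff' measurableSet_Ioc).mpr (ae_of_all _ fun x hx => ?_)
      have hx0 : 0 < x := lt_of_lt_of_le hrp hx.1.le
      show ‖x * deriv ψ x ^ 2‖ = x * deriv ψ x ^ 2
      rw [Real.norm_eq_abs, abs_of_nonneg (by positivity)]
    rw [this]
    exact key _ hRn
  have hIntBound : (∫ x in Set.Ioi rp, x * (deriv ψ x) ^ 2) ≤ A / c ^ 2 := by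
    have htend := MeasureTheory.intervalIntegral_tendsto_integral_Ioi (μ := volume)
      (b := fun R : ℝ => R) (l := atTop) rp hInt tendsto_id
    exact le_of_tendsto htend (eventually_atTop.mpr ⟨rp, fun R hR => key R hR⟩)
  -- convert to lintegral
  have hnnIoi : 0 ≤ᵐ[volume.restrict (Set.Ioi rp)] fun x => x * (deriv ψ x) ^ 2 := by
    refine (ae_restrict_iff' measurableSet_Ioi).mpr (ae_of_all _ fun x hx => ?_)
    have : 0 < x := lt_trans hrp hx
    positivity
  have hlhs : (∫⁻ r in Set.Ioi rp, ENNReal.ofReal (r * (deriv ψ r) ^ 2))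
      = ENNReal.ofReal (∫ x in Set.Ioi rp, x * (deriv ψ x) ^ 2) :=
    (MeasureTheory.ofReal_integral_eq_lintegral_ofReal hInt hnnIoi).symm
  rw [hlhs]
  calc ENNReal.ofReal (∫ x in Set.Ioi rp, x * (deriv ψ x) ^ 2)
      ≤ ENNReal.ofReal (A / c ^ 2) := ENNReal.ofReal_le_ofReal hIntBound
    _ = ENNReal.ofReal (1 / c ^ 2) * ENNReal.ofReal A := by
        rw [← ENNReal.ofReal_mul (by positivity)]
        congr 1; ring
    _ = ENNReal.ofReal (1 / c ^ 2) * L := by rw [hA_def, ENNReal.ofReal_toReal hF]
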